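/- Let M be an H-valued martingale and assume the upper BDG bound ‖M*_∞‖_{L_p} ≤ C_p ‖[M,M]_∞^{1/2}‖_{L_p} holds for some p ≥ 1 for all H-valued martingales. Then ‖[M,M]_∞^{1/2}‖_{L_{2p}} ≲_p ‖M*_∞‖_{L_{2p}}. -/

import Mathlib

open MeasureTheory Finset
open scoped ENNReal NNReal

section AuxBDG

variable {Ω : Type*} {H : Type*} [NormedAddCommGroup H] [InnerProductSpace ℝ H]
  [CompleteSpace H]

local notation "⟪" x ", " y "⟫" => @inner ℝ H _ x y

private lemma aux_sm_inner {m : MeasurableSpace Ω} {X Y : Ω → H}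
    (hX : StronglyMeasurable[m] X) (hY : StronglyMeasurable[m] Y) :
    StronglyMeasurable[m] (fun ω => ⟪X ω, Y ω⟫) :=
  continuous_inner.comp_stronglyMeasurable (hX.prodMk hY)

private lemma aux_integrable_inner {mΩ : MeasurableSpace Ω} {μ : Measure Ω} {X Y : Ω → H}
    (hX : MemLp X 2 μ) (hY : MemLp Y 2 μ) :
    Integrable (fun ω => ⟪X ω, Y ω⟫) μ := by
  have h := L2.integrable_inner (𝕜 := ℝ) (hX.toLp X) (hY.toLp Y)
  refine h.congr ?_
  filter_upwards [hX.coeFn_toLp, hY.coeFn_toLp] with ω h1 h2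
  rw [h1, h2]

private lemma aux_condExpL2_ae_eq_condexp {m mΩ : MeasurableSpace Ω} (hm : m ≤ mΩ)
    {μ : Measure Ω} [IsFiniteMeasure μ] {Y : Ω → H} (hY : MemLp Y 2 μ) :
    (condExpL2 H ℝ hm (hY.toLp Y) : Ω →₂[μ] H) =ᵐ[μ] μ[Y|m] := by
  refine ae_eq_condExp_of_forall_setIntegral_eq hm (hY.integrable one_le_two)
    (fun s _ hμs => integrableOn_condExpL2_of_measure_ne_top hm hμs.ne _)
    (fun s hs hμs => ?_) (aestronglyMeasurable_condExpL2 hm _)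
  rw [integral_condExpL2_eq hm (hY.toLp Y) hs hμs.ne]
  exact setIntegral_congr_ae (hm s hs) (hY.coeFn_toLp.mono fun ω h _ => h)

private lemma aux_setIntegral_inner_zero {m mΩ : MeasurableSpace Ω} (hm : m ≤ mΩ)
    {μ : Measure Ω} [IsFiniteMeasure μ] {X Y : Ω → H} (hXm : StronglyMeasurable[m] X)
    (hX2 : MemLp X 2 μ) (hY2 : MemLp Y 2 μ) (hY : μ[Y|m] =ᵐ[μ] 0) {s : Set Ω}
    (hs : MeasurableSet[m] s) :
    ∫ ω in s, ⟪X ω, Y ω⟫ ∂μ = 0 := by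
  set X' : Ω → H := s.indicator X with hX'def
  have hX'm : StronglyMeasurable[m] X' := hXm.indicator hs
  have hX'2 : MemLp X' 2 μ := hX2.indicator (hm s hs)
  set fX' : Ω →₂[μ] H := hX'2.toLp X' with hfX'
  set fY : Ω →₂[μ] H := hY2.toLp Y with hfY
  have hmem : fX' ∈ lpMeas H ℝ m 2 μ :=
    mem_lpMeas_iff_aestronglyMeasurable.mpr
      (AEStronglyMeasurable.congr hX'm.aestronglyMeasurable hX'2.coeFn_toLp.symm)
  have hproj : (condExpL2 H ℝ hm fX' : Ω →₂[μ] H) = fX' := by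
    rw [condExpL2]
    haveI : Fact (m ≤ mΩ) := ⟨hm⟩
    have h_coe : ((⟨fX', hmem⟩ : lpMeas H ℝ m 2 μ) : Ω →₂[μ] H) = fX' := rfl
    have h_orth := Submodule.orthogonalProjection_mem_subspace_eq_self
      (K := lpMeas H ℝ m 2 μ) ⟨fX', hmem⟩
    rw [← h_coe, h_orth]
  have h0 : (condExpL2 H ℝ hm fY : Ω →₂[μ] H) =ᵐ[μ] 0 :=
    (aux_condExpL2_ae_eq_condexp hm hY2).trans hY
  calc ∫ ω in s, ⟪X ω, Y ω⟫ ∂μ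
      = ∫ ω, ⟪X' ω, Y ω⟫ ∂μ := by
        rw [← integral_indicator (hm s hs)]
        congr 1
        ext ω
        by_cases hω : ω ∈ s
        · simp [hX'def, Set.indicator_of_mem hω]
        · simp [hX'def, Set.indicator_of_notMem hω]
    _ = ∫ ω, ⟪fX' ω, fY ω⟫ ∂μ := by
        refine integral_congr_ae ?_
        filter_upwards [hX'2.coeFn_toLp, hY2.coeFn_toLp] with ω h1 h2
        rw [h1, h2]
    _ = @inner ℝ (Ω →₂[μ] H) _ fX' fY := (L2.inner_def fX' fY).symm
    _ = @inner ℝ (Ω →₂[μ] H) _ ((condExpL2 H ℝ hm fX' : Ω →₂[μ] H)) fY := by rw [hproj]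
    _ = @inner ℝ (Ω →₂[μ] H) _ fX' ((condExpL2 H ℝ hm fY : Ω →₂[μ] H)) :=
        inner_condExpL2_left_eq_right hm
    _ = ∫ ω, ⟪fX' ω, (condExpL2 H ℝ hm fY : Ω →₂[μ] H) ω⟫ ∂μ := L2.inner_def _ _
    _ = 0 := by
        rw [← integral_zero Ω ℝ (μ := μ)]
        refine integral_congr_ae ?_
        filter_upwards [h0] with ω hω
        rw [hω]
        simp

private lemma aux_condexp_inner_smul_zero {m mΩ : MeasurableSpace Ω} (hm : m ≤ mΩ)
    {μ : Measure Ω} [IsFiniteMeasure μ] {X Y : Ω → H} (hXm : StronglyMeasurable[m] X)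
    (hX2 : MemLp X 2 μ) (hY2 : MemLp Y 2 μ) (hY : μ[Y|m] =ᵐ[μ] 0) (e : H) :
    μ[fun ω => ⟪X ω, Y ω⟫ • e|m] =ᵐ[μ] 0 := by
  have hint : Integrable (fun ω => ⟪X ω, Y ω⟫) μ := aux_integrable_inner hX2 hY2
  refine (ae_eq_condExp_of_forall_setIntegral_eq hm (hint.smul_const e)
    (fun s _ _ => (integrable_zero _ _ _).integrableOn) (fun s hs hμs => ?_)
    (stronglyMeasurable_zero.aestronglyMeasurable)).symm
  rw [integral_smul_const, aux_setIntegral_inner_zero hm hXm hX2 hY2 hY hs]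
  simp

private lemma aux_real {a b d : ℝ} (ha : 0 ≤ a) (hb : 0 ≤ b) (hd : 0 ≤ d)
    (h : a ≤ b ^ 2 + 2 * d * (b * a ^ (1/2 : ℝ))) :
    a ^ (1/2 : ℝ) ≤ (2 + 4 * d ^ 2) ^ (1/2 : ℝ) * b := by
  rw [show a ^ (1/2:ℝ) = Real.sqrt a from (Real.sqrt_eq_rpow a).symm] at h ⊢
  rw [show ((2:ℝ) + 4 * d ^ 2) ^ (1/2:ℝ) = Real.sqrt (2 + 4 * d ^ 2) from
    (Real.sqrt_eq_rpow _).symm]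
  set s := Real.sqrt a with hsdef
  have hs0 : 0 ≤ s := Real.sqrt_nonneg a
  have hs2 : s ^ 2 = a := Real.sq_sqrt ha
  set K := Real.sqrt (2 + 4 * d ^ 2) with hKdef
  have hK0 : 0 ≤ K := Real.sqrt_nonneg _
  have hK2 : K ^ 2 = 2 + 4 * d ^ 2 := Real.sq_sqrt (by positivity)
  have h1 : s ^ 2 ≤ (K * b) ^ 2 := by nlinarith [sq_nonneg (s - 2 * d * b)]
  calc s = Real.sqrt (s ^ 2) := (Real.sqrt_sq hs0).symm
    _ ≤ Real.sqrt ((K * b) ^ 2) := Real.sqrt_le_sqrt h1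
    _ = K * b := Real.sqrt_sq (by positivity)

private lemma aux_quad {x y c : ℝ≥0∞} (hx : x ≠ ∞) (hy : y ≠ ∞) (hc : c ≠ ∞)
    (h : x ≤ y ^ 2 + 2 * c * (y * x ^ (1/2 : ℝ))) :
    x ^ (1/2 : ℝ) ≤ (2 + 4 * c ^ 2) ^ (1/2 : ℝ) * y := by
  have hrne : y ^ 2 + 2 * c * (y * x ^ (1/2:ℝ)) ≠ ∞ := by
    refine ENNReal.add_ne_top.mpr ⟨ENNReal.pow_ne_top hy, ?_⟩
    exact ENNReal.mul_ne_top (ENNReal.mul_ne_top (by simp) hc)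
      (ENNReal.mul_ne_top hy (ENNReal.rpow_ne_top_of_nonneg (by norm_num) hx))
  have hreal : x.toReal ≤ y.toReal ^ 2 + 2 * c.toReal * (y.toReal * x.toReal ^ (1/2:ℝ)) := by
    have h' := ENNReal.toReal_mono hrne h
    rw [ENNReal.toReal_add (ENNReal.pow_ne_top hy) (by
        exact ENNReal.mul_ne_top (ENNReal.mul_ne_top (by simp) hc)
          (ENNReal.mul_ne_top hy (ENNReal.rpow_ne_top_of_nonneg (by norm_num) hx))),
      ENNReal.toReal_pow, ENNReal.toReal_mul, ENNReal.toReal_mul, ENNReal.toReal_mul,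
      ENNReal.toReal_ofNat, ← ENNReal.toReal_rpow] at h'
    exact h'
  have key := aux_real ENNReal.toReal_nonneg ENNReal.toReal_nonneg ENNReal.toReal_nonneg hreal
  have hbase : (2 + 4 * c ^ 2 : ℝ≥0∞) ≠ ∞ :=
    ENNReal.add_ne_top.mpr ⟨by simp, ENNReal.mul_ne_top (by simp) (ENNReal.pow_ne_top hc)⟩
  rw [← ENNReal.toReal_le_toReal (ENNReal.rpow_ne_top_of_nonneg (by norm_num) hx)
    (ENNReal.mul_ne_top (ENNReal.rpow_ne_top_of_nonneg (by norm_num) hbase) hy)]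
  rw [ENNReal.toReal_mul, ← ENNReal.toReal_rpow, ← ENNReal.toReal_rpow,
    ENNReal.toReal_add (by simp) (ENNReal.mul_ne_top (by simp) (ENNReal.pow_ne_top hc)),
    ENNReal.toReal_mul, ENNReal.toReal_pow, ENNReal.toReal_ofNat, ENNReal.toReal_ofNat]
  exact key

private lemma aux_combine {IX IY IT IB C : ℝ≥0∞} {p : ℝ} (hp : 1 ≤ p) (hC : C ≠ ∞)
    (hIY : IY ≠ ∞) (hIX : IX ≠ ∞)
    (F2 : IX ^ (1/p) ≤ IY ^ (1/p) + 2 * IT ^ (1/p))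
    (F3 : IT ^ (1/p) ≤ C * IB ^ (1/p))
    (F4 : IB ≤ IY ^ (1/2 : ℝ) * IX ^ (1/2 : ℝ)) :
    IX ^ (1/(2*p)) ≤ (2 + 4 * C ^ 2) ^ (1/2 : ℝ) * IY ^ (1/(2*p)) := by
  have hp0 : (0:ℝ) < p := lt_of_lt_of_le one_pos hp
  have hxt : IX ^ (1/p) ≠ ∞ := ENNReal.rpow_ne_top_of_nonneg (by positivity) hIX
  have hyt : IY ^ (1/(2*p)) ≠ ∞ := ENNReal.rpow_ne_top_of_nonneg (by positivity) hIY
  have hIX12 : IX ^ (1/(2*p)) = (IX ^ (1/p)) ^ (1/2 : ℝ) := by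
    rw [← ENNReal.rpow_mul]
    congr 1
    field_simp
    try ring
  have hIY2 : IY ^ (1/p) = (IY ^ (1/(2*p))) ^ 2 := by
    rw [← ENNReal.rpow_natCast (IY ^ (1/(2*p))) 2, ← ENNReal.rpow_mul, Nat.cast_ofNat]
    congr 1
    field_simp
    try ring
  have hF4' : IB ^ (1/p) ≤ IY ^ (1/(2*p)) * (IX ^ (1/p)) ^ (1/2 : ℝ) := by
    calc IB ^ (1/p) ≤ (IY ^ (1/2:ℝ) * IX ^ (1/2:ℝ)) ^ (1/p) :=
          ENNReal.rpow_le_rpow F4 (by positivity)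
      _ = IY ^ (1/(2*p)) * (IX ^ (1/p)) ^ (1/2 : ℝ) := by
          rw [ENNReal.mul_rpow_of_nonneg _ _ (by positivity : (0:ℝ) ≤ 1/p),
            ← ENNReal.rpow_mul, ← ENNReal.rpow_mul, ← ENNReal.rpow_mul]
          congr 1
          · congr 1; field_simp; try ring
          · congr 1; ring
  have hmain : IX ^ (1/p) ≤ (IY ^ (1/(2*p))) ^ 2 +
      2 * C * (IY ^ (1/(2*p)) * (IX ^ (1/p)) ^ (1/2 : ℝ)) := by
    calc IX ^ (1/p) ≤ IY ^ (1/p) + 2 * IT ^ (1/p) := F2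
      _ ≤ (IY ^ (1/(2*p))) ^ 2 + 2 * (C * (IY ^ (1/(2*p)) * (IX ^ (1/p)) ^ (1/2:ℝ))) := by
          refine add_le_add (le_of_eq hIY2) (mul_le_mul_right ?_ 2)
          exact F3.trans (mul_le_mul_right hF4' C)
      _ = (IY ^ (1/(2*p))) ^ 2 +
          2 * C * (IY ^ (1/(2*p)) * (IX ^ (1/p)) ^ (1/2:ℝ)) := by ring
  rw [hIX12]
  exact aux_quad hxt hyt hC hmain

end AuxBDG

/-- Discrete-time "lower bounds by upper bounds": if the BDG upper bound in `L_p`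
(`‖N*‖_{L_p} ≤ C ‖[N,N]^{1/2}‖_{L_p}`) holds for all `H`-valued martingales `N` on the given
filtered probability space, then for every martingale `M` the lower bound holds in `L_{2p}`:
`‖[M,M]^{1/2}‖_{L_{2p}} ≲_p ‖M*‖_{L_{2p}}`. Here `[N,N]_n = ∑_{k<n} ‖N_{k+1} - N_k‖²` and
`N*_n = max_{k ≤ n} ‖N_k‖`. -/
theorem stmt_15 {Ω H : Type*} {mΩ : MeasurableSpace Ω} {μ : Measure Ω} [IsProbabilityMeasure μ]
    [NormedAddCommGroup H] [InnerProductSpace ℝ H] [CompleteSpace H] [SecondCountableTopology H]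
    (𝒢 : Filtration ℕ mΩ) (p : ℝ) (hp : 1 ≤ p) (C : ℝ≥0∞) (hC : C ≠ ∞)
    (hupper : ∀ N : ℕ → Ω → H, Martingale N 𝒢 μ → N 0 = 0 → ∀ n : ℕ,
      (∫⁻ ω, (⨆ k ∈ Finset.range (n + 1), (‖N k ω‖₊ : ℝ≥0∞)) ^ p ∂μ) ^ (1 / p) ≤
        C * (∫⁻ ω, (∑ k ∈ Finset.range n,
          (‖N (k + 1) ω - N k ω‖₊ : ℝ≥0∞) ^ 2) ^ (p / 2) ∂μ) ^ (1 / p))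
    (M : ℕ → Ω → H) (hM : Martingale M 𝒢 μ) (h0 : M 0 = 0) :
    ∃ C' : ℝ≥0∞, C' ≠ ∞ ∧ ∀ n : ℕ,
      (∫⁻ ω, (∑ k ∈ Finset.range n,
          (‖M (k + 1) ω - M k ω‖₊ : ℝ≥0∞) ^ 2) ^ p ∂μ) ^ (1 / (2 * p)) ≤
        C' * (∫⁻ ω, (⨆ k ∈ Finset.range (n + 1),
          (‖M k ω‖₊ : ℝ≥0∞)) ^ (2 * p) ∂μ) ^ (1 / (2 * p)) := by
  classical
  have hp0 : (0:ℝ) < p := lt_of_lt_of_le one_pos hp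
  have hbase_ne : (2 + 4 * C ^ 2 : ℝ≥0∞) ≠ ∞ :=
    ENNReal.add_ne_top.mpr ⟨by simp, ENNReal.mul_ne_top (by simp) (ENNReal.pow_ne_top hC)⟩
  refine ⟨(2 + 4 * C ^ 2) ^ (1/2 : ℝ), ENNReal.rpow_ne_top_of_nonneg (by norm_num) hbase_ne, ?_⟩
  intro n
  by_cases hH : ∃ e : H, ‖e‖ = 1
  swap
  · have hzero : ∀ x : H, x = 0 := by
      intro x
      by_contra hx
      exact hH ⟨‖x‖⁻¹ • x, by
        rw [norm_smul, norm_inv, norm_norm, inv_mul_cancel₀ (norm_ne_zero_iff.mpr hx)]⟩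
    have hLHS : (∫⁻ ω, (∑ k ∈ Finset.range n,
        (‖M (k + 1) ω - M k ω‖₊ : ℝ≥0∞) ^ 2) ^ p ∂μ) = 0 := by
      have hA0 : ∀ ω, (∑ k ∈ Finset.range n,
          (‖M (k + 1) ω - M k ω‖₊ : ℝ≥0∞) ^ 2) ^ p = 0 := by
        intro ω
        have hs0 : (∑ k ∈ Finset.range n, (‖M (k + 1) ω - M k ω‖₊ : ℝ≥0∞) ^ 2) = 0 := by
          refine Finset.sum_eq_zero fun k _ => ?_
          rw [hzero (M (k + 1) ω - M k ω)]
          simp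
        rw [hs0, ENNReal.zero_rpow_of_pos hp0]
      rw [lintegral_congr hA0, lintegral_zero]
    rw [hLHS, ENNReal.zero_rpow_of_pos (by positivity)]
    exact bot_le
  obtain ⟨e, he⟩ := hH
  have he' : ‖e‖₊ = 1 := NNReal.coe_injective (by simpa using he)
  have hsmM : ∀ k, StronglyMeasurable (M k) :=
    fun k => (hM.stronglyMeasurable k).mono (𝒢.le k)
  have hS_meas : Measurable fun ω => ⨆ k ∈ Finset.range (n + 1), (‖M k ω‖₊ : ℝ≥0∞) :=
    Measurable.iSup fun k => Measurable.iSup fun _ => (hsmM k).nnnorm.measurable.coe_nnreal_ennreal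
  have hA_meas : Measurable fun ω => ∑ k ∈ Finset.range n,
      (‖M (k + 1) ω - M k ω‖₊ : ℝ≥0∞) ^ 2 :=
    Finset.measurable_sum _ fun k _ => (((hsmM (k + 1)).sub (hsmM k)).nnnorm.measurable.coe_nnreal_ennreal).pow_const 2
  set IY := ∫⁻ ω, (⨆ k ∈ Finset.range (n + 1), (‖M k ω‖₊ : ℝ≥0∞)) ^ (2 * p) ∂μ with hIYdef
  by_cases hIYtop : IY = ∞
  · rw [hIYtop, ENNReal.top_rpow_of_pos (by positivity), ENNReal.mul_top]
    · exact le_top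
    · refine (ENNReal.rpow_pos ?_ hbase_ne).ne'
      exact lt_of_lt_of_le (by norm_num) le_self_add
  have hSle : ∀ k, k ≤ n → ∀ ω, (‖M k ω‖₊ : ℝ≥0∞) ≤
      ⨆ j ∈ Finset.range (n + 1), (‖M j ω‖₊ : ℝ≥0∞) := fun k hk ω =>
    le_iSup₂ (f := fun j (_ : j ∈ Finset.range (n + 1)) => (‖M j ω‖₊ : ℝ≥0∞)) k
      (Finset.mem_range.mpr (by omega))
  have mem2 : ∀ k, k ≤ n → MemLp (M k) 2 μ := by
    intro k hk
    refine ⟨(hsmM k).aestronglyMeasurable, ?_⟩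
    rw [eLpNorm_eq_lintegral_rpow_enorm_toReal (by norm_num) (by norm_num)]
    refine ENNReal.rpow_lt_top_of_nonneg (by positivity) ?_
    have hb : ∀ ω, (‖M k ω‖₊ : ℝ≥0∞) ^ (2 : ℝ≥0∞).toReal ≤
        1 + (⨆ j ∈ Finset.range (n + 1), (‖M j ω‖₊ : ℝ≥0∞)) ^ (2 * p) := by
      intro ω
      rw [ENNReal.toReal_ofNat]
      rcases le_total ((‖M k ω‖₊ : ℝ≥0∞)) 1 with h1 | h1
      · refine le_trans ?_ le_self_add
        exact (ENNReal.rpow_le_rpow h1 (by norm_num)).trans_eq (ENNReal.one_rpow _)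
      · calc (‖M k ω‖₊ : ℝ≥0∞) ^ (2 : ℝ)
            ≤ (‖M k ω‖₊ : ℝ≥0∞) ^ (2 * p) :=
              ENNReal.rpow_le_rpow_of_exponent_le h1 (by nlinarith)
          _ ≤ (⨆ j ∈ Finset.range (n + 1), (‖M j ω‖₊ : ℝ≥0∞)) ^ (2 * p) :=
              ENNReal.rpow_le_rpow (hSle k hk ω) (by positivity)
          _ ≤ 1 + _ := le_add_self
    refine ne_of_lt ?_
    calc ∫⁻ ω, (‖M k ω‖₊ : ℝ≥0∞) ^ (2 : ℝ≥0∞).toReal ∂μ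
        ≤ ∫⁻ ω, (1 + (⨆ j ∈ Finset.range (n + 1), (‖M j ω‖₊ : ℝ≥0∞)) ^ (2 * p)) ∂μ :=
          lintegral_mono hb
      _ = 1 * μ Set.univ + IY := by
          rw [lintegral_add_left measurable_const, lintegral_const, hIYdef]
      _ < ∞ := by
          rw [measure_univ, mul_one]
          exact ENNReal.add_lt_top.mpr ⟨by norm_num, Ne.lt_top hIYtop⟩
  set d : ℕ → Ω → ℝ := fun k ω => inner ℝ (M k ω) (M (k + 1) ω - M k ω) with hddef
  set N : ℕ → Ω → H := fun m ω => (∑ k ∈ Finset.range (min m n), d k ω) • e with hNdef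
  have hd_sm : ∀ k m, k + 1 ≤ m → StronglyMeasurable[𝒢 m] (d k) := by
    intro k m hkm
    simp only [hddef]
    exact aux_sm_inner ((hM.stronglyMeasurable k).mono (𝒢.mono (by omega)))
      (((hM.stronglyMeasurable (k + 1)).mono (𝒢.mono hkm)).sub
        ((hM.stronglyMeasurable k).mono (𝒢.mono (by omega))))
  have hd_int : ∀ k, k < n → Integrable (d k) μ := by
    intro k hk
    simp only [hddef]
    exact aux_integrable_inner (mem2 k hk.le) ((mem2 (k + 1) hk).sub (mem2 k hk.le))
  have hd_cond : ∀ k, k < n → μ[fun ω => d k ω • e|𝒢 k] =ᵐ[μ] 0 := by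
    intro k hk
    have hYm : μ[M (k + 1) - M k|𝒢 k] =ᵐ[μ] 0 := by
      have h1 := condExp_sub (m := 𝒢 k) (hM.integrable (k + 1)) (hM.integrable k)
      have h2 := hM.condExp_ae_eq (Nat.le_succ k)
      have h3 : μ[M k|𝒢 k] = M k :=
        condExp_of_stronglyMeasurable (𝒢.le k) (hM.stronglyMeasurable k) (hM.integrable k)
      refine h1.trans ?_
      rw [h3]
      filter_upwards [h2] with ω hω
      simp [hω]
    have hz := aux_condexp_inner_smul_zero (𝒢.le k) (hM.stronglyMeasurable k) (mem2 k hk.le)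
      ((mem2 (k + 1) hk).sub (mem2 k hk.le)) hYm e
    simp only [hddef]
    exact hz
  have hNsm : ∀ m, StronglyMeasurable[𝒢 m] (N m) := by
    intro m
    simp only [hNdef]
    exact (Finset.stronglyMeasurable_fun_sum _ fun k hk =>
      hd_sm k m (by have := Finset.mem_range.mp hk; omega)).smul_const e
  have hNint : ∀ m, Integrable (N m) μ := by
    intro m
    simp only [hNdef]
    exact (integrable_finset_sum _ fun k hk =>
      hd_int k (by have := Finset.mem_range.mp hk; omega)).smul_const e
  have hNmart : Martingale N 𝒢 μ := by
    refine ⟨hNsm, ?_⟩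
    intro i j hij
    induction j, hij using Nat.le_induction with
    | base =>
      rw [condExp_of_stronglyMeasurable (𝒢.le i) (hNsm i) (hNint i)]
    | succ m him ih =>
      by_cases hmn : m < n
      · have hNsucc : N (m + 1) = N m + fun ω => d m ω • e := by
          funext ω
          simp only [hNdef, Pi.add_apply]
          rw [min_eq_left (by omega : m + 1 ≤ n), min_eq_left (by omega : m ≤ n),
            Finset.sum_range_succ, add_smul]
        rw [hNsucc]
        refine (condExp_add (hNint m) ((hd_int m hmn).smul_const e) _).trans ?_
        have htower : μ[fun ω => d m ω • e|𝒢 i] =ᵐ[μ] 0 := by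
          have ht := condExp_condExp_of_le (μ := μ) (𝒢.mono him) (𝒢.le m)
            (f := fun ω => d m ω • e)
          refine ht.symm.trans ?_
          refine (condExp_congr_ae (m := 𝒢 i) (hd_cond m hmn)).trans ?_
          rw [condExp_zero]
        filter_upwards [ih, htower] with ω h1 h2
        simp only [Pi.add_apply, h1, h2, Pi.zero_apply, add_zero]
      · have hNeq : N (m + 1) = N m := by
          funext ω
          simp only [hNdef]
          rw [min_eq_right (by omega : n ≤ m + 1), min_eq_right (by omega : n ≤ m)]
        rw [hNeq]
        exact ih
  have hN0 : N 0 = 0 := by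
    funext ω
    simp [hNdef]
  have hT_meas : Measurable fun ω => ⨆ k ∈ Finset.range (n + 1), (‖N k ω‖₊ : ℝ≥0∞) :=
    Measurable.iSup fun k => Measurable.iSup fun _ => ((hNsm k).mono (𝒢.le k)).nnnorm.measurable.coe_nnreal_ennreal
  have hU := hupper N hNmart hN0 n
  have hid : ∀ ω, ∀ m : ℕ, ‖M m ω‖ ^ 2 =
      (∑ k ∈ Finset.range m, ‖M (k + 1) ω - M k ω‖ ^ 2)
        + 2 * ∑ k ∈ Finset.range m, d k ω := by
    intro ω m
    induction m with
    | zero => simp [h0]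
    | succ m ih =>
      rw [Finset.sum_range_succ, Finset.sum_range_succ]
      calc ‖M (m + 1) ω‖ ^ 2
          = ‖M m ω + (M (m + 1) ω - M m ω)‖ ^ 2 := by
            rw [add_sub_cancel]
        _ = ‖M m ω‖ ^ 2 + 2 * inner ℝ (M m ω) (M (m + 1) ω - M m ω)
              + ‖M (m + 1) ω - M m ω‖ ^ 2 := norm_add_sq_real _ _
        _ = _ := by
            rw [ih]
            simp only [hddef]
            ring
  have hNn : ∀ ω, (‖N n ω‖₊ : ℝ≥0∞) = (‖∑ k ∈ Finset.range n, d k ω‖₊ : ℝ≥0∞) := by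
    intro ω
    simp only [hNdef]
    rw [min_self, nnnorm_smul, he', mul_one]
  have hkey : ∀ ω, (∑ k ∈ Finset.range n, (‖M (k + 1) ω - M k ω‖₊ : ℝ≥0∞) ^ 2) ≤
      (⨆ k ∈ Finset.range (n + 1), (‖M k ω‖₊ : ℝ≥0∞)) ^ 2
        + 2 * ⨆ k ∈ Finset.range (n + 1), (‖N k ω‖₊ : ℝ≥0∞) := by
    intro ω
    have h1 : (∑ k ∈ Finset.range n, (‖M (k + 1) ω - M k ω‖₊ : ℝ≥0∞) ^ 2) =
        ENNReal.ofReal (∑ k ∈ Finset.range n, ‖M (k + 1) ω - M k ω‖ ^ 2) := by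
      rw [ENNReal.ofReal_sum_of_nonneg (fun k _ => by positivity)]
      refine Finset.sum_congr rfl fun k _ => ?_
      rw [ENNReal.ofReal_pow (norm_nonneg _), ofReal_norm, enorm_eq_nnnorm]
    have h2 : (∑ k ∈ Finset.range n, ‖M (k + 1) ω - M k ω‖ ^ 2) ≤
        ‖M n ω‖ ^ 2 + 2 * |∑ k ∈ Finset.range n, d k ω| := by
      have h3 := hid ω n
      have h4 : -|∑ k ∈ Finset.range n, d k ω| ≤ ∑ k ∈ Finset.range n, d k ω :=
        neg_abs_le _
      linarith
    calc (∑ k ∈ Finset.range n, (‖M (k + 1) ω - M k ω‖₊ : ℝ≥0∞) ^ 2)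
        = ENNReal.ofReal (∑ k ∈ Finset.range n, ‖M (k + 1) ω - M k ω‖ ^ 2) := h1
      _ ≤ ENNReal.ofReal (‖M n ω‖ ^ 2 + 2 * |∑ k ∈ Finset.range n, d k ω|) :=
          ENNReal.ofReal_le_ofReal h2
      _ = ENNReal.ofReal (‖M n ω‖ ^ 2) +
          ENNReal.ofReal (2 * |∑ k ∈ Finset.range n, d k ω|) :=
          ENNReal.ofReal_add (by positivity) (by positivity)
      _ ≤ (⨆ k ∈ Finset.range (n + 1), (‖M k ω‖₊ : ℝ≥0∞)) ^ 2
            + 2 * ⨆ k ∈ Finset.range (n + 1), (‖N k ω‖₊ : ℝ≥0∞) := by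
          refine add_le_add ?_ ?_
          · rw [ENNReal.ofReal_pow (norm_nonneg _), ofReal_norm, enorm_eq_nnnorm]
            exact pow_le_pow_left' (hSle n le_rfl ω) 2
          · rw [ENNReal.ofReal_mul (by norm_num), ENNReal.ofReal_ofNat,
              ← Real.enorm_eq_ofReal_abs, enorm_eq_nnnorm, ← hNn ω]
            refine mul_le_mul_right ?_ 2
            exact le_iSup₂ (f := fun k (_ : k ∈ Finset.range (n + 1)) =>
              (‖N k ω‖₊ : ℝ≥0∞)) n (Finset.mem_range.mpr (by omega))
  have hpq : Real.HolderConjugate 2 2 := Real.HolderConjugate.two_two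
  have hBA : ∀ ω, (∑ k ∈ Finset.range n, (‖N (k + 1) ω - N k ω‖₊ : ℝ≥0∞) ^ 2) ≤
      (⨆ k ∈ Finset.range (n + 1), (‖M k ω‖₊ : ℝ≥0∞)) ^ 2 *
        ∑ k ∈ Finset.range n, (‖M (k + 1) ω - M k ω‖₊ : ℝ≥0∞) ^ 2 := by
    intro ω
    rw [Finset.mul_sum]
    refine Finset.sum_le_sum fun k hk => ?_
    have hk' : k < n := Finset.mem_range.mp hk
    have hdiff : N (k + 1) ω - N k ω = d k ω • e := by
      simp only [hNdef]
      rw [min_eq_left (by omega : k + 1 ≤ n), min_eq_left (by omega : k ≤ n),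
        Finset.sum_range_succ, add_smul]
      abel
    rw [hdiff, nnnorm_smul, he', mul_one]
    have hb1 : (‖d k ω‖₊ : ℝ≥0∞) ≤
        (‖M k ω‖₊ : ℝ≥0∞) * (‖M (k + 1) ω - M k ω‖₊ : ℝ≥0∞) := by
      simp only [hddef]
      exact_mod_cast nnnorm_inner_le_nnnorm (𝕜 := ℝ) (M k ω) (M (k + 1) ω - M k ω)
    calc (‖d k ω‖₊ : ℝ≥0∞) ^ 2
        ≤ ((‖M k ω‖₊ : ℝ≥0∞) * (‖M (k + 1) ω - M k ω‖₊ : ℝ≥0∞)) ^ 2 :=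
          pow_le_pow_left' hb1 2
      _ = (‖M k ω‖₊ : ℝ≥0∞) ^ 2 * (‖M (k + 1) ω - M k ω‖₊ : ℝ≥0∞) ^ 2 := mul_pow _ _ 2
      _ ≤ (⨆ j ∈ Finset.range (n + 1), (‖M j ω‖₊ : ℝ≥0∞)) ^ 2 *
            (‖M (k + 1) ω - M k ω‖₊ : ℝ≥0∞) ^ 2 :=
          mul_le_mul_left (pow_le_pow_left' (hSle k hk'.le ω) 2) _
  have F4 : (∫⁻ ω, (∑ k ∈ Finset.range n,
        (‖N (k + 1) ω - N k ω‖₊ : ℝ≥0∞) ^ 2) ^ (p / 2) ∂μ) ≤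
      IY ^ (1/2 : ℝ) * (∫⁻ ω, (∑ k ∈ Finset.range n,
        (‖M (k + 1) ω - M k ω‖₊ : ℝ≥0∞) ^ 2) ^ p ∂μ) ^ (1/2 : ℝ) := by
    calc (∫⁻ ω, (∑ k ∈ Finset.range n, (‖N (k + 1) ω - N k ω‖₊ : ℝ≥0∞) ^ 2) ^ (p / 2) ∂μ)
        ≤ ∫⁻ ω, ((fun ω => (⨆ k ∈ Finset.range (n + 1), (‖M k ω‖₊ : ℝ≥0∞)) ^ p) *
            (fun ω => (∑ k ∈ Finset.range n,
              (‖M (k + 1) ω - M k ω‖₊ : ℝ≥0∞) ^ 2) ^ (p / 2))) ω ∂μ := by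
          refine lintegral_mono fun ω => ?_
          calc (∑ k ∈ Finset.range n, (‖N (k + 1) ω - N k ω‖₊ : ℝ≥0∞) ^ 2) ^ (p / 2)
              ≤ ((⨆ k ∈ Finset.range (n + 1), (‖M k ω‖₊ : ℝ≥0∞)) ^ 2 *
                  ∑ k ∈ Finset.range n,
                    (‖M (k + 1) ω - M k ω‖₊ : ℝ≥0∞) ^ 2) ^ (p / 2) :=
                ENNReal.rpow_le_rpow (hBA ω) (by positivity)
            _ = _ := by
                rw [ENNReal.mul_rpow_of_nonneg _ _ (by positivity : (0:ℝ) ≤ p / 2)]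
                simp only [Pi.mul_apply]
                congr 1
                rw [← ENNReal.rpow_natCast _ 2, ← ENNReal.rpow_mul, Nat.cast_ofNat,
                  show (2 : ℝ) * (p / 2) = p by ring]
      _ ≤ (∫⁻ ω, ((⨆ k ∈ Finset.range (n + 1), (‖M k ω‖₊ : ℝ≥0∞)) ^ p) ^ (2:ℝ) ∂μ) ^ (1/2:ℝ) *
          (∫⁻ ω, ((∑ k ∈ Finset.range n,
            (‖M (k + 1) ω - M k ω‖₊ : ℝ≥0∞) ^ 2) ^ (p / 2)) ^ (2:ℝ) ∂μ) ^ (1/2:ℝ) :=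
          ENNReal.lintegral_mul_le_Lp_mul_Lq μ hpq (hS_meas.pow_const p).aemeasurable
            (hA_meas.pow_const (p / 2)).aemeasurable
      _ = IY ^ (1/2 : ℝ) * (∫⁻ ω, (∑ k ∈ Finset.range n,
            (‖M (k + 1) ω - M k ω‖₊ : ℝ≥0∞) ^ 2) ^ p ∂μ) ^ (1/2 : ℝ) := by
          congr 1
          · congr 1
            rw [hIYdef]
            refine lintegral_congr fun ω => ?_
            rw [← ENNReal.rpow_mul, mul_comm p 2]
          · congr 1
            refine lintegral_congr fun ω => ?_
            rw [← ENNReal.rpow_mul, div_mul_cancel₀ p two_ne_zero]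
  have hfm : Measurable fun ω => (⨆ k ∈ Finset.range (n + 1), (‖M k ω‖₊ : ℝ≥0∞)) ^ 2 :=
    hS_meas.pow_const 2
  have hgm : Measurable fun ω => 2 * ⨆ k ∈ Finset.range (n + 1), (‖N k ω‖₊ : ℝ≥0∞) :=
    hT_meas.const_mul 2
  have F2 : (∫⁻ ω, (∑ k ∈ Finset.range n,
        (‖M (k + 1) ω - M k ω‖₊ : ℝ≥0∞) ^ 2) ^ p ∂μ) ^ (1/p) ≤
      IY ^ (1/p) + 2 * (∫⁻ ω, (⨆ k ∈ Finset.range (n + 1),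
        (‖N k ω‖₊ : ℝ≥0∞)) ^ p ∂μ) ^ (1/p) := by
    calc (∫⁻ ω, (∑ k ∈ Finset.range n,
          (‖M (k + 1) ω - M k ω‖₊ : ℝ≥0∞) ^ 2) ^ p ∂μ) ^ (1/p)
        ≤ (∫⁻ ω, (((fun ω => (⨆ k ∈ Finset.range (n + 1), (‖M k ω‖₊ : ℝ≥0∞)) ^ 2) +
            (fun ω => 2 * ⨆ k ∈ Finset.range (n + 1), (‖N k ω‖₊ : ℝ≥0∞))) ω) ^ p ∂μ) ^ (1/p) := by
          refine ENNReal.rpow_le_rpow (lintegral_mono fun ω => ?_) (by positivity)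
          exact ENNReal.rpow_le_rpow (hkey ω) hp0.le
      _ ≤ (∫⁻ ω, ((⨆ k ∈ Finset.range (n + 1), (‖M k ω‖₊ : ℝ≥0∞)) ^ 2) ^ p ∂μ) ^ (1/p) +
          (∫⁻ ω, (2 * ⨆ k ∈ Finset.range (n + 1), (‖N k ω‖₊ : ℝ≥0∞)) ^ p ∂μ) ^ (1/p) :=
          ENNReal.lintegral_Lp_add_le hfm.aemeasurable hgm.aemeasurable hp
      _ = IY ^ (1/p) + 2 * (∫⁻ ω, (⨆ k ∈ Finset.range (n + 1),
            (‖N k ω‖₊ : ℝ≥0∞)) ^ p ∂μ) ^ (1/p) := by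
          congr 1
          · congr 1
            rw [hIYdef]
            refine lintegral_congr fun ω => ?_
            rw [← ENNReal.rpow_natCast _ 2, ← ENNReal.rpow_mul, Nat.cast_ofNat]
          · rw [lintegral_congr fun ω => ENNReal.mul_rpow_of_nonneg 2 _ hp0.le,
              lintegral_const_mul' _ _ (ENNReal.rpow_ne_top_of_nonneg hp0.le (by simp)),
              ENNReal.mul_rpow_of_nonneg _ _ (by positivity : (0:ℝ) ≤ 1/p),
              ← ENNReal.rpow_mul, mul_one_div_cancel hp0.ne', ENNReal.rpow_one]
  have hAle : ∀ ω, (∑ k ∈ Finset.range n, (‖M (k + 1) ω - M k ω‖₊ : ℝ≥0∞) ^ 2) ≤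
      (4 * n : ℝ≥0∞) * (⨆ k ∈ Finset.range (n + 1), (‖M k ω‖₊ : ℝ≥0∞)) ^ 2 := by
    intro ω
    have hterm : ∀ k ∈ Finset.range n, (‖M (k + 1) ω - M k ω‖₊ : ℝ≥0∞) ^ 2 ≤
        (2 * ⨆ j ∈ Finset.range (n + 1), (‖M j ω‖₊ : ℝ≥0∞)) ^ 2 := by
      intro k hk
      have hk' := Finset.mem_range.mp hk
      refine pow_le_pow_left' ?_ 2
      calc (‖M (k + 1) ω - M k ω‖₊ : ℝ≥0∞)
          ≤ (‖M (k + 1) ω‖₊ : ℝ≥0∞) + (‖M k ω‖₊ : ℝ≥0∞) := by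
            exact_mod_cast nnnorm_sub_le _ _
        _ ≤ (⨆ j ∈ Finset.range (n + 1), (‖M j ω‖₊ : ℝ≥0∞)) +
            (⨆ j ∈ Finset.range (n + 1), (‖M j ω‖₊ : ℝ≥0∞)) :=
            add_le_add (hSle (k + 1) (by omega) ω) (hSle k (by omega) ω)
        _ = 2 * _ := (two_mul _).symm
    calc (∑ k ∈ Finset.range n, (‖M (k + 1) ω - M k ω‖₊ : ℝ≥0∞) ^ 2)
        ≤ ∑ _k ∈ Finset.range n,
            (2 * ⨆ j ∈ Finset.range (n + 1), (‖M j ω‖₊ : ℝ≥0∞)) ^ 2 :=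
          Finset.sum_le_sum hterm
      _ = (n : ℝ≥0∞) * (2 * ⨆ j ∈ Finset.range (n + 1), (‖M j ω‖₊ : ℝ≥0∞)) ^ 2 := by
          rw [Finset.sum_const, Finset.card_range, nsmul_eq_mul]
      _ = (4 * n : ℝ≥0∞) * (⨆ j ∈ Finset.range (n + 1), (‖M j ω‖₊ : ℝ≥0∞)) ^ 2 := by
          ring
  have hIX : (∫⁻ ω, (∑ k ∈ Finset.range n,
      (‖M (k + 1) ω - M k ω‖₊ : ℝ≥0∞) ^ 2) ^ p ∂μ) ≠ ∞ := by
    refine ne_of_lt (lt_of_le_of_lt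
      (lintegral_mono fun ω => ENNReal.rpow_le_rpow (hAle ω) hp0.le) ?_)
    have h4n : (4 * n : ℝ≥0∞) ≠ ∞ := ENNReal.mul_ne_top (by simp) (ENNReal.natCast_ne_top n)
    calc ∫⁻ ω, ((4 * n : ℝ≥0∞) *
          (⨆ k ∈ Finset.range (n + 1), (‖M k ω‖₊ : ℝ≥0∞)) ^ 2) ^ p ∂μ
        = ∫⁻ ω, (4 * n : ℝ≥0∞) ^ p *
            ((⨆ k ∈ Finset.range (n + 1), (‖M k ω‖₊ : ℝ≥0∞)) ^ 2) ^ p ∂μ := by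
          refine lintegral_congr fun ω => ?_
          rw [ENNReal.mul_rpow_of_nonneg _ _ hp0.le]
      _ = (4 * n : ℝ≥0∞) ^ p *
          ∫⁻ ω, ((⨆ k ∈ Finset.range (n + 1), (‖M k ω‖₊ : ℝ≥0∞)) ^ 2) ^ p ∂μ :=
          lintegral_const_mul' _ _ (ENNReal.rpow_ne_top_of_nonneg hp0.le h4n)
      _ = (4 * n : ℝ≥0∞) ^ p * IY := by
          congr 1
          rw [hIYdef]
          refine lintegral_congr fun ω => ?_
          rw [← ENNReal.rpow_natCast _ 2, ← ENNReal.rpow_mul, Nat.cast_ofNat]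
      _ < ∞ := (ENNReal.mul_ne_top
          (ENNReal.rpow_ne_top_of_nonneg hp0.le h4n) hIYtop).lt_top
  exact aux_combine hp hC hIYtop hIX F2 hU F4
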